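/- arXiv:1412.7549 — 2 statements merged into one kernel-verified Lean document; each statement's English description precedes it below -/
import Mathlib

section
/- Let f = (v_1,...,v_k) be an orthonormal k-frame over p ∈ M and φ a smooth function on T^k M. Then the curvature pairing of the vertical gradients is unchanged by projecting onto the skew-symmetric part: Σ_{i,j=1}^k ⟨R(grad^{v,j} φ(f), v_j) v_i, grad^{v,i} φ(f)⟩ = Σ_{i,j=1}^k ⟨R(grad^{v,j}_{o(k)} φ(f), v_j) v_i, grad^{v,i}_{o(k)} φ(f)⟩. -/
open scoped RealInnerProductSpace
open MeasureTheory

noncomputable section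

/-- Calculus on the bundle `T^k M` of `k`-tuples of tangent vectors over a compact
Riemannian `n`-manifold `M`.  All tangent spaces are identified with
`EuclideanSpace ℝ (Fin n)` (via a measurable choice of orthonormal frames), so that
semi-basic vector fields are maps `F → EuclideanSpace ℝ (Fin n)`. -/
structure TupleBundle (n k : ℕ) where
  /-- the base manifold -/
  M : Type
  topM : TopologicalSpace M
  cptM : @CompactSpace M topM
  /-- the total space of `T^k M` -/
  F : Type
  /-- footpoint projection -/
  proj : F → M
  /-- the components `v₁, …, v_k` of a tuple of tangent vectors -/
  vec : F → Fin k → EuclideanSpace ℝ (Fin n)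
  /-- smoothness predicate for real functions on `T^k M` -/
  Smooth : (F → ℝ) → Prop
  /-- smoothness predicate for semi-basic vector fields -/
  SmoothVF : (F → EuclideanSpace ℝ (Fin n)) → Prop
  /-- `pt f u t` is the parallel transport `f_u(t)` of the whole tuple along the
  geodesic through the footpoint of `f` with initial velocity `u` -/
  pt : F → EuclideanSpace ℝ (Fin n) → ℝ → F
  /-- parallel transport of individual tangent vectors along that geodesic -/
  ptv : F → EuclideanSpace ℝ (Fin n) → ℝ →
    (EuclideanSpace ℝ (Fin n) ≃ₗᵢ[ℝ] EuclideanSpace ℝ (Fin n))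
  pt_zero : ∀ (f : F) (u : EuclideanSpace ℝ (Fin n)), pt f u 0 = f
  ptv_zero : ∀ (f : F) (u : EuclideanSpace ℝ (Fin n)), ptv f u 0 = LinearIsometryEquiv.refl ℝ _
  vec_pt : ∀ (f : F) (u : EuclideanSpace ℝ (Fin n)) (t : ℝ) (i : Fin k), vec (pt f u t) i = ptv f u t (vec f i)
  /-- vertical translation: replace the `i`-th vector `vᵢ` of the tuple by `vᵢ + u` -/
  vshift : F → Fin k → EuclideanSpace ℝ (Fin n) → F
  proj_vshift : ∀ (f : F) (i : Fin k) (u : EuclideanSpace ℝ (Fin n)), proj (vshift f i u) = proj f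
  vec_vshift : ∀ (f : F) (i : Fin k) (u : EuclideanSpace ℝ (Fin n)), vec (vshift f i u) = Function.update (vec f) i (vec f i + u)
  /-- the horizontal gradient -/
  gradH : (F → ℝ) → F → EuclideanSpace ℝ (Fin n)
  /-- the `i`-th vertical gradient -/
  gradV : Fin k → (F → ℝ) → F → EuclideanSpace ℝ (Fin n)
  gradH_spec : ∀ (φ : F → ℝ) (f : F) (u : EuclideanSpace ℝ (Fin n)), Smooth φ →
    ⟪gradH φ f, u⟫ = deriv (fun t : ℝ => φ (pt f u t)) 0
  gradV_spec : ∀ (i : Fin k) (φ : F → ℝ) (f : F) (u : EuclideanSpace ℝ (Fin n)), Smooth φ →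
    ⟪gradV i φ f, u⟫ = deriv (fun t : ℝ => φ (vshift f i (t • u))) 0
  /-- horizontal covariant derivative `∇ʰ_u X (f)` of a semi-basic vector field -/
  covH : (F → EuclideanSpace ℝ (Fin n)) → F → EuclideanSpace ℝ (Fin n) →
    EuclideanSpace ℝ (Fin n)
  covH_spec : ∀ (X : F → EuclideanSpace ℝ (Fin n)) (f : F) (u : EuclideanSpace ℝ (Fin n)), SmoothVF X →
    covH X f u = deriv (fun t : ℝ => (ptv f u t).symm (X (pt f u t))) 0
  /-- the `i`-th vertical covariant derivative `∇^{v,i}_u X (f)` -/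
  covV : Fin k → (F → EuclideanSpace ℝ (Fin n)) → F → EuclideanSpace ℝ (Fin n) →
    EuclideanSpace ℝ (Fin n)
  covV_spec : ∀ (i : Fin k) (X : F → EuclideanSpace ℝ (Fin n)) (f : F) (u : EuclideanSpace ℝ (Fin n)), SmoothVF X →
    covV i X f u = deriv (fun t : ℝ => X (vshift f i (t • u))) 0
  /-- the Riemannian curvature tensor `R(x,y)z` at the footpoint of `f` -/
  R : F → EuclideanSpace ℝ (Fin n) → EuclideanSpace ℝ (Fin n) →
    EuclideanSpace ℝ (Fin n) → EuclideanSpace ℝ (Fin n)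
  R_antisym₁ : ∀ (f : F) (x y z w : EuclideanSpace ℝ (Fin n)), ⟪R f x y z, w⟫ = -⟪R f y x z, w⟫
  R_antisym₂ : ∀ (f : F) (x y z w : EuclideanSpace ℝ (Fin n)), ⟪R f x y z, w⟫ = -⟪R f x y w, z⟫
  R_pairsym : ∀ (f : F) (x y z w : EuclideanSpace ℝ (Fin n)), ⟪R f x y z, w⟫ = ⟪R f z w x, y⟫
  R_base : ∀ (f : F) (i : Fin k) (u : EuclideanSpace ℝ (Fin n)), R (vshift f i u) = R f
  smooth_gradH : ∀ (φ : F → ℝ), Smooth φ → SmoothVF (gradH φ)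
  smooth_gradV : ∀ (i : Fin k) (φ : F → ℝ), Smooth φ → SmoothVF (gradV i φ)

namespace TupleBundle

variable {n k : ℕ} (B : TupleBundle n k)

/-- the generator `Gⁱ` of the `i`-th frame flow, `Gⁱφ(f) = ⟪grad ʰφ(f), vᵢ⟫` -/
def G (i : Fin k) (φ : B.F → ℝ) (f : B.F) : ℝ := ⟪B.gradH φ f, B.vec f i⟫

/-- the horizontal divergence of a semi-basic vector field -/
def divH (X : B.F → EuclideanSpace ℝ (Fin n)) (f : B.F) : ℝ :=
  ∑ j : Fin n, ⟪B.covH X f (EuclideanSpace.single j 1), EuclideanSpace.single j 1⟫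

/-- the `i`-th vertical divergence of a semi-basic vector field -/
def divV (i : Fin k) (X : B.F → EuclideanSpace ℝ (Fin n)) (f : B.F) : ℝ :=
  ∑ j : Fin n, ⟪B.covV i X f (EuclideanSpace.single j 1), EuclideanSpace.single j 1⟫

/-- the vertical gradient orthogonally projected to the tangent space of the frame
bundle `P^k M`:
`grad^{v,i}_{o(k)} φ(f) = grad^{v,i} φ(f) − ½ Σⱼ (⟪grad^{v,i}φ(f),vⱼ⟫+⟪grad^{v,j}φ(f),vᵢ⟫) vⱼ` -/
def gradVProj (i : Fin k) (φ : B.F → ℝ) (f : B.F) : EuclideanSpace ℝ (Fin n) :=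
  B.gradV i φ f - (1 / 2 : ℝ) •
    ∑ j : Fin k, (⟪B.gradV i φ f, B.vec f j⟫ + ⟪B.gradV j φ f, B.vec f i⟫) • B.vec f j

end TupleBundle

/-- The bundle `P^k M ⊂ T^k M` of orthonormal `k`-frames, equipped with the natural
measure `dμ = dvol dν_p`, where `ν_p` is the `O(n)`-invariant measure on the Stiefel
fiber. -/
structure FrameBundle (n k : ℕ) extends TupleBundle n k where
  measF : MeasurableSpace F
  /-- the measure `dμ = dvol dν_p`, carried by the orthonormal frames -/
  μ : @MeasureTheory.Measure F measF
  μ_frames : ∀ᵐ f ∂μ, Orthonormal ℝ (vec f)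
  μ_finite : MeasureTheory.IsFiniteMeasure μ


/-- A double sum of a symmetric tensor against an antisymmetric one vanishes. -/
lemma sum_symm_antisymm_aux {k : ℕ} (t A : Fin k → Fin k → ℝ)
    (ht : ∀ a b, t a b = t b a) (hA : ∀ a b, A a b = -A b a) :
    ∑ a : Fin k, ∑ b : Fin k, t a b * A a b = 0 := by
  have h : (∑ a : Fin k, ∑ b : Fin k, t a b * A a b)
      = -(∑ a : Fin k, ∑ b : Fin k, t a b * A a b) := by
    calc ∑ a : Fin k, ∑ b : Fin k, t a b * A a b
        = ∑ b : Fin k, ∑ a : Fin k, t a b * A a b := Finset.sum_comm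
      _ = ∑ b : Fin k, ∑ a : Fin k, -(t b a * A b a) := by
          refine Finset.sum_congr rfl fun b _ => Finset.sum_congr rfl fun a _ => ?_
          rw [ht a b, hA a b]; ring
      _ = -(∑ a : Fin k, ∑ b : Fin k, t a b * A a b) := by
          simp [Finset.sum_neg_distrib]
  linarith

/-- The curvature pairing of the vertical gradients is unchanged by projecting onto the
skew-symmetric part. -/
theorem stmt10 {n k : ℕ} (B : TupleBundle n k) (φ : B.F → ℝ) (hφ : B.Smooth φ)
    (f : B.F) (hf : Orthonormal ℝ (B.vec f)) :
    ∑ i : Fin k, ∑ j : Fin k,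
        ⟪B.R f (B.gradV j φ f) (B.vec f j) (B.vec f i), B.gradV i φ f⟫
      = ∑ i : Fin k, ∑ j : Fin k,
        ⟪B.R f (B.gradVProj j φ f) (B.vec f j) (B.vec f i), B.gradVProj i φ f⟫ := by
  classical
  set v : Fin k → EuclideanSpace ℝ (Fin n) := B.vec f with hv
  set g : Fin k → EuclideanSpace ℝ (Fin n) := fun i => B.gradV i φ f with hg
  set t : Fin k → Fin k → ℝ := fun i j => (1 / 2) * (⟪g i, v j⟫ + ⟪g j, v i⟫) with htdef
  have ht : ∀ i j, t i j = t j i := by intro i j; simp only [htdef]; ring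
  set c : Fin k → EuclideanSpace ℝ (Fin n) := fun i => ∑ a : Fin k, t i a • v a with hc
  have hproj : ∀ i, B.gradVProj i φ f = g i - c i := by
    intro i
    rw [TupleBundle.gradVProj, hc, Finset.smul_sum]
    congr 1
    refine Finset.sum_congr rfl fun a _ => ?_
    rw [smul_smul]
  -- the pairing with slots 1 and 4 exchanged
  have swap14 : ∀ x y z w : EuclideanSpace ℝ (Fin n),
      ⟪B.R f x y z, w⟫ = ⟪B.R f w z y, x⟫ := by
    intro x y z w
    rw [B.R_pairsym, B.R_antisym₁, B.R_antisym₂, neg_neg]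
  -- linearity in slot 4
  have Qsum4 : ∀ (x y z : EuclideanSpace ℝ (Fin n)) (i : Fin k),
      ⟪B.R f x y z, c i⟫ = ∑ a : Fin k, t i a * ⟪B.R f x y z, v a⟫ := by
    intro x y z i
    rw [hc, inner_sum]
    exact Finset.sum_congr rfl fun a _ => real_inner_smul_right _ _ _
  -- linearity in slot 1
  have Qsum1 : ∀ (y z w : EuclideanSpace ℝ (Fin n)) (i : Fin k),
      ⟪B.R f (c i) y z, w⟫ = ∑ a : Fin k, t i a * ⟪B.R f (v a) y z, w⟫ := by
    intro y z w i
    rw [swap14, hc, inner_sum]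
    refine Finset.sum_congr rfl fun a _ => ?_
    rw [real_inner_smul_right, ← swap14]
  have Qsub1 : ∀ x x' y z w : EuclideanSpace ℝ (Fin n),
      ⟪B.R f (x - x') y z, w⟫ = ⟪B.R f x y z, w⟫ - ⟪B.R f x' y z, w⟫ := by
    intro x x' y z w
    rw [swap14 (x - x') y z w, inner_sub_right, ← swap14 x y z w, ← swap14 x' y z w]
  -- the mixed sums with c in slot 1 vanish, for any weights in slot 4
  have key : ∀ w : Fin k → EuclideanSpace ℝ (Fin n),
      (∑ i : Fin k, ∑ j : Fin k, ⟪B.R f (c j) (v j) (v i), w i⟫) = 0 := by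
    intro w
    have : (∑ i : Fin k, ∑ j : Fin k, ⟪B.R f (c j) (v j) (v i), w i⟫)
        = ∑ j : Fin k, ∑ a : Fin k,
            t j a * (∑ i : Fin k, ⟪B.R f (v a) (v j) (v i), w i⟫) := by
      rw [Finset.sum_comm]
      refine Finset.sum_congr rfl fun j _ => ?_
      calc ∑ i : Fin k, ⟪B.R f (c j) (v j) (v i), w i⟫
          = ∑ i : Fin k, ∑ a : Fin k, t j a * ⟪B.R f (v a) (v j) (v i), w i⟫ :=
            Finset.sum_congr rfl fun i _ => Qsum1 _ _ _ _
        _ = ∑ a : Fin k, ∑ i : Fin k, t j a * ⟪B.R f (v a) (v j) (v i), w i⟫ :=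
            Finset.sum_comm
        _ = ∑ a : Fin k, t j a * ∑ i : Fin k, ⟪B.R f (v a) (v j) (v i), w i⟫ :=
            Finset.sum_congr rfl fun a _ => (Finset.mul_sum _ _ _).symm
    rw [this]
    refine sum_symm_antisymm_aux t _ ht fun a b => ?_
    rw [← Finset.sum_neg_distrib]
    refine Finset.sum_congr rfl fun i _ => ?_
    rw [B.R_antisym₁]
  -- the sum with c in slot 4 and g in slot 1 vanishes
  have key2 : (∑ i : Fin k, ∑ j : Fin k, ⟪B.R f (g j) (v j) (v i), c i⟫) = 0 := by
    have : (∑ i : Fin k, ∑ j : Fin k, ⟪B.R f (g j) (v j) (v i), c i⟫)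
        = ∑ i : Fin k, ∑ b : Fin k,
            t i b * (∑ j : Fin k, ⟪B.R f (g j) (v j) (v i), v b⟫) := by
      refine Finset.sum_congr rfl fun i _ => ?_
      calc ∑ j : Fin k, ⟪B.R f (g j) (v j) (v i), c i⟫
          = ∑ j : Fin k, ∑ b : Fin k, t i b * ⟪B.R f (g j) (v j) (v i), v b⟫ :=
            Finset.sum_congr rfl fun j _ => Qsum4 _ _ _ _
        _ = ∑ b : Fin k, ∑ j : Fin k, t i b * ⟪B.R f (g j) (v j) (v i), v b⟫ :=
            Finset.sum_comm
        _ = ∑ b : Fin k, t i b * ∑ j : Fin k, ⟪B.R f (g j) (v j) (v i), v b⟫ :=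
            Finset.sum_congr rfl fun b _ => (Finset.mul_sum _ _ _).symm
    rw [this]
    refine sum_symm_antisymm_aux t _ ht fun a b => ?_
    rw [← Finset.sum_neg_distrib]
    refine Finset.sum_congr rfl fun j _ => ?_
    rw [B.R_antisym₂]
  have expand : ∀ i j : Fin k,
      ⟪B.R f (B.gradVProj j φ f) (B.vec f j) (B.vec f i), B.gradVProj i φ f⟫
        = ⟪B.R f (g j) (v j) (v i), g i⟫ - ⟪B.R f (g j) (v j) (v i), c i⟫
          - ⟪B.R f (c j) (v j) (v i), g i⟫ + ⟪B.R f (c j) (v j) (v i), c i⟫ := by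
    intro i j
    rw [hproj, hproj, Qsub1, inner_sub_right, inner_sub_right]
    ring
  calc ∑ i : Fin k, ∑ j : Fin k, ⟪B.R f (g j) (v j) (v i), g i⟫
      = (∑ i : Fin k, ∑ j : Fin k, ⟪B.R f (g j) (v j) (v i), g i⟫)
        - (∑ i : Fin k, ∑ j : Fin k, ⟪B.R f (g j) (v j) (v i), c i⟫)
        - (∑ i : Fin k, ∑ j : Fin k, ⟪B.R f (c j) (v j) (v i), g i⟫)
        + (∑ i : Fin k, ∑ j : Fin k, ⟪B.R f (c j) (v j) (v i), c i⟫) := by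
        rw [key g, key c, key2]; ring
    _ = ∑ i : Fin k, ∑ j : Fin k,
        ⟪B.R f (B.gradVProj j φ f) (B.vec f j) (B.vec f i), B.gradVProj i φ f⟫ := by
        simp_rw [expand, Finset.sum_add_distrib, Finset.sum_sub_distrib]

end
end

section
/- Let (v_1,...,v_n) be an orthonormal basis of an inner product space, and let w_1,...,w_n be vectors such that A_{ij} = ⟨w_i, v_j⟩ is skew-symmetric, w_i ∈ span{v_{k+1},...,v_n} for i ≤ k, and w_i ∈ span{v_1,...,v_k} for i ≥ k+1. Then in the exterior square, Σ_{j=1}^n w_j ∧ v_j = 2 Σ_{j=1}^k w_j ∧ v_j. -/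
open scoped RealInnerProductSpace

noncomputable section

/-- Doubling identity in the exterior square: if `v` is an orthonormal basis,
`(⟪w i, v j⟫)` is skew-symmetric, `w i ∈ span {v_(k+1), …, v_n}` for `i ≤ k` and
`w i ∈ span {v_1, …, v_k}` for `i ≥ k+1`, then `Σ_j w_j ∧ v_j = 2 Σ_(j ≤ k) w_j ∧ v_j`. -/
theorem stmt14 {V : Type*} [NormedAddCommGroup V] [InnerProductSpace ℝ V]
    {n k : ℕ} (hk1 : 1 ≤ k) (hk : k ≤ n) (v w : Fin n → V)
    (hon : Orthonormal ℝ v) (hspan : ⊤ ≤ Submodule.span ℝ (Set.range v))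
    (hskew : ∀ i j : Fin n, ⟪w i, v j⟫ = -⟪w j, v i⟫)
    (hlow : ∀ i : Fin n, (i : ℕ) < k →
      w i ∈ Submodule.span ℝ (v '' {l : Fin n | k ≤ (l : ℕ)}))
    (hhigh : ∀ i : Fin n, k ≤ (i : ℕ) →
      w i ∈ Submodule.span ℝ (v '' {l : Fin n | (l : ℕ) < k})) :
    ∑ j : Fin n, ExteriorAlgebra.ι ℝ (w j) * ExteriorAlgebra.ι ℝ (v j)
      = (2 : ℝ) • ∑ j ∈ Finset.univ.filter (fun j : Fin n => (j : ℕ) < k),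
          ExteriorAlgebra.ι ℝ (w j) * ExteriorAlgebra.ι ℝ (v j) := by
  classical
  -- orthonormal basis from `v`
  let b : OrthonormalBasis (Fin n) ℝ V := OrthonormalBasis.mk hon hspan
  have hbv : ⇑b = v := OrthonormalBasis.coe_mk hon hspan
  -- elements of the span of a subfamily are orthogonal to the other basis vectors
  have key : ∀ (S : Set (Fin n)) (l : Fin n), l ∉ S →
      ∀ x ∈ Submodule.span ℝ (v '' S), ⟪x, v l⟫ = 0 := by
    intro S l hl x hx
    refine Submodule.span_induction ?_ ?_ ?_ ?_ hx
    · rintro y ⟨m, hm, rfl⟩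
      exact hon.2 (fun h => hl (h ▸ hm))
    · exact inner_zero_left _
    · intro a c _ _ ha hc
      rw [inner_add_left, ha, hc, add_zero]
    · intro r a _ ha
      rw [real_inner_smul_left, ha, mul_zero]
  -- cross-block orthogonality
  have hzero : ∀ j l : Fin n, ((j : ℕ) < k ↔ (l : ℕ) < k) → ⟪w j, v l⟫ = 0 := by
    intro j l hjl
    by_cases hj : (j : ℕ) < k
    · exact key _ l (by simpa using not_le.mpr (hjl.mp hj)) _ (hlow j hj)
    · exact key _ l (by simpa using hj ∘ hjl.mpr) _ (hhigh j (not_lt.mp hj))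
  set ι := ExteriorAlgebra.ι ℝ (M := V) with hι
  set T : Fin n → Fin n → ExteriorAlgebra ℝ V :=
    fun j l => ⟪w j, v l⟫ • (ι (v l) * ι (v j)) with hT
  -- expansion of each wedge term
  have hexp : ∀ j : Fin n, ι (w j) * ι (v j) = ∑ l, T j l := by
    intro j
    have hw : w j = ∑ l, ⟪w j, v l⟫ • v l := by
      have h := b.sum_repr' (w j)
      rw [hbv] at h
      refine h.symm.trans (Finset.sum_congr rfl fun l _ => ?_)
      rw [real_inner_comm]
    conv_lhs => rw [hw]
    rw [map_sum, Finset.sum_mul]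
    exact Finset.sum_congr rfl fun l _ => by rw [map_smul, smul_mul_assoc]
  -- symmetry of T
  have hsym : ∀ j l : Fin n, T j l = T l j := by
    intro j l
    have h1 : ι (v j) * ι (v l) = -(ι (v l) * ι (v j)) :=
      eq_neg_of_add_eq_zero_left (by rw [add_comm]; exact ExteriorAlgebra.ι_add_mul_swap _ _)
    simp only [hT, hskew l j, h1, smul_neg, neg_smul, neg_neg]
  set F := Finset.univ.filter (fun j : Fin n => (j : ℕ) < k) with hF
  have hmemF : ∀ j : Fin n, j ∈ F ↔ (j : ℕ) < k := by
    intro j; simp [hF]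
  have hTzero : ∀ j l : Fin n, (j ∈ F ↔ l ∈ F) → T j l = 0 := by
    intro j l h
    have h0 : ⟪w j, v l⟫ = 0 := hzero j l (by rw [← hmemF, ← hmemF]; exact h)
    simp only [hT, h0, zero_smul]
  -- inner sums restrict to the opposite block
  have hrow : ∀ j ∈ F, ∑ l, T j l = ∑ l ∈ Fᶜ, T j l := by
    intro j hj
    refine (Finset.sum_subset (Finset.subset_univ Fᶜ) fun l _ hl => ?_).symm
    exact hTzero j l (by simp at hl; simp [hj, hl])
  have hrow' : ∀ j ∈ Fᶜ, ∑ l, T j l = ∑ l ∈ F, T j l := by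
    intro j hj
    rw [Finset.mem_compl] at hj
    refine (Finset.sum_subset (Finset.subset_univ F) fun l _ hl => ?_).symm
    exact hTzero j l (by simp [hj, hl])
  have hswap : ∑ j ∈ Fᶜ, ∑ l ∈ F, T j l = ∑ j ∈ F, ∑ l ∈ Fᶜ, T j l := by
    rw [Finset.sum_comm]
    exact Finset.sum_congr rfl fun j _ => Finset.sum_congr rfl fun l _ => hsym l j
  calc ∑ j : Fin n, ι (w j) * ι (v j)
      = ∑ j : Fin n, ∑ l, T j l := Finset.sum_congr rfl fun j _ => hexp j
    _ = (∑ j ∈ F, ∑ l, T j l) + ∑ j ∈ Fᶜ, ∑ l, T j l :=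
        (Finset.sum_add_sum_compl F _).symm
    _ = (∑ j ∈ F, ∑ l ∈ Fᶜ, T j l) + ∑ j ∈ Fᶜ, ∑ l ∈ F, T j l := by
        rw [Finset.sum_congr rfl hrow, Finset.sum_congr rfl hrow']
    _ = (∑ j ∈ F, ∑ l ∈ Fᶜ, T j l) + ∑ j ∈ F, ∑ l ∈ Fᶜ, T j l := by rw [hswap]
    _ = (2 : ℝ) • ∑ j ∈ F, ∑ l ∈ Fᶜ, T j l := by
        rw [two_smul]
    _ = (2 : ℝ) • ∑ j ∈ F, ∑ l, T j l := by
        rw [Finset.sum_congr rfl hrow]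
    _ = (2 : ℝ) • ∑ j ∈ F, ι (w j) * ι (v j) := by
        rw [Finset.sum_congr rfl fun j _ => (hexp j).symm]

end
end
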